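/- Let X = Σ_{i=1}^n X_i where the X_i are independent exponential random variables with rates a_i > 0. Let μ = Σ 1/a_i and a_* = min_i a_i. Then for every λ ∈ (0, 1), Pr[X ≤ λμ] ≤ exp(−a_*·μ·(λ − 1 − ln λ)). -/

import Mathlib

open MeasureTheory ProbabilityTheory Finset
open scoped ENNReal

namespace StmtAux15

open Real Set Filter Topology
open scoped NNReal

lemma expPDFReal_eq (r x : ℝ) :
    exponentialPDFReal r x = if 0 ≤ x then r * exp (-(r * x)) else 0 := by
  rw [exponentialPDFReal, gammaPDFReal]
  simp only [rpow_one, Real.Gamma_one, div_one, sub_self, rpow_zero, mul_one]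

lemma expMeasure_eq (r : ℝ) :
    expMeasure r = volume.withDensity
      (fun x => ((exponentialPDFReal r x).toNNReal : ℝ≥0∞)) := rfl

lemma integral_exp_neg_mul_Ioi {c : ℝ} (hc : 0 < c) :
    ∫ x in Ioi (0 : ℝ), Real.exp (-(c * x)) = 1 / c := by
  have hint : IntegrableOn (fun x => Real.exp (-(c * x))) (Ioi (0 : ℝ)) := by
    simpa [neg_mul] using exp_neg_integrableOn_Ioi 0 hc
  have hderiv : ∀ x ∈ Ici (0 : ℝ),
      HasDerivAt (fun x => -(Real.exp (-(c * x)) / c)) (Real.exp (-(c * x))) x := by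
    intro x _
    convert (((hasDerivAt_id x).const_mul (-c)).exp.div_const c).neg using 1
    · rfl
    · rfl
    · funext y; simp [neg_mul]
    · simp only [id_eq, mul_one, neg_mul, mul_neg, neg_div, neg_neg]
      rw [mul_div_assoc, div_self hc.ne', mul_one]
  have htend : Tendsto (fun x => -(Real.exp (-(c * x)) / c)) atTop (𝓝 0) := by
    have h1 : Tendsto (fun x : ℝ => c * x) atTop atTop :=
      Tendsto.const_mul_atTop hc tendsto_id
    have h2 : Tendsto (fun x : ℝ => Real.exp (-(c * x))) atTop (𝓝 0) :=
      tendsto_exp_neg_atTop_nhds_zero.comp h1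
    simpa using (h2.div_const c).neg
  have := integral_Ioi_of_hasDerivAt_of_tendsto' hderiv hint htend
  rw [this]
  simp [one_div]

lemma exp_mul_integral {r t : ℝ} (hr : 0 < r) (ht : t < r) :
    Integrable (fun x => Real.exp (t * x)) (expMeasure r) ∧
      ∫ x, Real.exp (t * x) ∂(expMeasure r) = r / (r - t) := by
  have hmeas : Measurable fun x => (exponentialPDFReal r x).toNNReal :=
    (measurable_exponentialPDFReal r).real_toNNReal
  have hkey : ∀ x : ℝ, ((exponentialPDFReal r x).toNNReal : ℝ≥0) • Real.exp (t * x)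
      = Set.indicator (Ici (0 : ℝ)) (fun x => r * Real.exp (-((r - t) * x))) x := by
    intro x
    rw [NNReal.smul_def, Real.coe_toNNReal', expPDFReal_eq]
    by_cases hx : 0 ≤ x
    · rw [if_pos hx, Set.indicator_of_mem (Set.mem_Ici.2 hx),
        max_eq_left (by positivity), smul_eq_mul, mul_assoc, ← Real.exp_add]
      congr 1
      ring
    · rw [if_neg hx, Set.indicator_of_notMem (by simpa using hx)]
      simp
  have hind_int : Integrable
      (Set.indicator (Ici (0 : ℝ)) fun x => r * Real.exp (-((r - t) * x))) volume := by
    refine (IntegrableOn.integrable_indicator ?_ measurableSet_Ici)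
    rw [integrableOn_Ici_iff_integrableOn_Ioi]
    exact ((exp_neg_integrableOn_Ioi 0 (sub_pos.2 ht)).const_mul r).congr
      (Filter.Eventually.of_forall fun x => by simp only [neg_mul])
  constructor
  · rw [expMeasure_eq, integrable_withDensity_iff_integrable_smul hmeas]
    exact hind_int.congr (Eventually.of_forall fun x => (hkey x).symm)
  · rw [expMeasure_eq, integral_withDensity_eq_integral_smul hmeas]
    calc ∫ x, ((exponentialPDFReal r x).toNNReal : ℝ≥0) • Real.exp (t * x)
        = ∫ x, Set.indicator (Ici (0 : ℝ)) (fun x => r * Real.exp (-((r - t) * x))) x := by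
          exact integral_congr_ae (Eventually.of_forall hkey)
      _ = ∫ x in Ici (0 : ℝ), r * Real.exp (-((r - t) * x)) :=
          integral_indicator measurableSet_Ici
      _ = ∫ x in Ioi (0 : ℝ), r * Real.exp (-((r - t) * x)) :=
          integral_Ici_eq_integral_Ioi
      _ = r * ∫ x in Ioi (0 : ℝ), Real.exp (-((r - t) * x)) := integral_const_mul _ _
      _ = r * (1 / (r - t)) := by rw [integral_exp_neg_mul_Ioi (sub_pos.2 ht)]
      _ = r / (r - t) := by ring

lemma mgf_exp {Ω : Type*} [MeasurableSpace Ω] (μ : Measure Ω) (Y : Ω → ℝ)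
    (hY : Measurable Y) {r t : ℝ} (hr : 0 < r) (ht : t < r)
    (hd : μ.map Y = expMeasure r) :
    mgf Y μ t = r / (r - t) ∧ Integrable (fun ω => Real.exp (t * Y ω)) μ := by
  obtain ⟨hint, hval⟩ := exp_mul_integral hr ht
  have hsm : AEStronglyMeasurable (fun x => Real.exp (t * x)) (μ.map Y) :=
    ((measurable_id.const_mul t).exp).aestronglyMeasurable
  constructor
  · rw [mgf, ← integral_map hY.aemeasurable hsm, hd, hval]
  · exact (integrable_map_measure hsm hY.aemeasurable).mp (by rwa [hd])

lemma log_aux {b a s : ℝ} (hb : 0 < b) (hba : b ≤ a) (hs : 0 < s) :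
    b / a * Real.log (1 + s / b) ≤ Real.log (1 + s / a) := by
  have ha : 0 < a := hb.trans_le hba
  have hc1 : (0 : ℝ) ≤ b / a := by positivity
  have hc2 : b / a ≤ 1 := (div_le_one ha).2 hba
  have hd : (0 : ℝ) ≤ 1 - b / a := by linarith
  have hsum : b / a + (1 - b / a) = 1 := by ring
  have h := (strictConcaveOn_log_Ioi.concaveOn).2 (x := 1 + s / b) (y := (1 : ℝ))
    (mem_Ioi.2 (by positivity)) (mem_Ioi.2 one_pos) hc1 hd hsum
  simp only [smul_eq_mul, Real.log_one, mul_zero, add_zero, mul_one] at h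
  have harg : b / a * (1 + s / b) + (1 - b / a) = 1 + s / a := by
    field_simp
    ring
  rwa [harg] at h

end StmtAux15

/-- Tail bound for a sum of independent exponential random variables
(Janson, Theorem 5.1). -/
theorem stmt_15 {Ω : Type*} {m0 : MeasurableSpace Ω} (μ : Measure Ω)
    [IsProbabilityMeasure μ] (n : ℕ) (hn : 0 < n) (a : Fin n → ℝ)
    (ha : ∀ i, 0 < a i) (X : Fin n → Ω → ℝ)
    (hmeas : ∀ i, Measurable (X i))
    (hindep : iIndepFun X μ)
    (hdist : ∀ i, μ.map (X i) = expMeasure (a i))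
    (lam : ℝ) (hlam0 : 0 < lam) (hlam1 : lam < 1) :
    (μ {ω | ∑ i, X i ω ≤ lam * ∑ i, 1 / a i}).toReal ≤
      Real.exp (-(⨅ i, a i) * (∑ i, 1 / a i) * (lam - 1 - Real.log lam)) := by
  haveI : Nonempty (Fin n) := Fin.pos_iff_nonempty.mp hn
  set b := ⨅ i, a i with hbdef
  obtain ⟨j, hj⟩ := exists_eq_ciInf_of_finite (f := a)
  have hb : 0 < b := by rw [hbdef, ← hj]; exact ha j
  have hble : ∀ i, b ≤ a i := fun i => ciInf_le (Set.Finite.bddBelow (Set.finite_range a)) i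
  set M := ∑ i, 1 / a i with hM
  set s := b * (1 - lam) / lam with hs_def
  have hs : 0 < s := div_pos (mul_pos hb (by linarith)) hlam0
  set t := -s with htdef
  have ht0 : t ≤ 0 := by rw [htdef]; linarith
  have hti : ∀ i, t < a i := fun i => lt_of_le_of_lt ht0 (ha i)
  have hmgf := fun i => StmtAux15.mgf_exp μ (X i) (hmeas i) (ha i) (hti i) (hdist i)
  have h_int_sum : Integrable (fun ω => Real.exp (t * (∑ i, X i) ω)) μ :=
    hindep.integrable_exp_mul_sum hmeas (fun i _ => (hmgf i).2)
  have hchern := measure_le_le_exp_mul_mgf (μ := μ) (X := ∑ i, X i) (t := t)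
    (lam * M) ht0 h_int_sum
  have hsets : {ω | (∑ i, X i) ω ≤ lam * M} = {ω | ∑ i, X i ω ≤ lam * M} := by
    ext ω; simp [Finset.sum_apply]
  rw [hsets] at hchern
  refine hchern.trans ?_
  rw [hindep.mgf_sum hmeas]
  have hprod : ∏ i, mgf (X i) μ t = Real.exp (∑ i, Real.log (a i / (a i - t))) := by
    rw [Real.exp_sum]
    exact Finset.prod_congr rfl fun i _ => by
      rw [(hmgf i).1, Real.exp_log (div_pos (ha i) (sub_pos.2 (hti i)))]
  rw [hprod, ← Real.exp_add, Real.exp_le_exp]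
  have key : ∀ i, Real.log (a i / (a i - t)) ≤ b / a i * Real.log lam := by
    intro i
    have hai := ha i
    have h1 : a i - t = a i + s := by rw [htdef]; ring
    have h2 : a i / (a i + s) = (1 + s / a i)⁻¹ := by
      rw [show (1 : ℝ) + s / a i = (a i + s) / a i by field_simp, inv_div]
    have h3 := StmtAux15.log_aux hb (hble i) hs
    have h4 : 1 + s / b = lam⁻¹ := by
      rw [hs_def]
      field_simp
      ring
    rw [h4, Real.log_inv] at h3
    rw [h1, h2, Real.log_inv]
    have : b / a i * Real.log lam = -(b / a i * -Real.log lam) := by ring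
    rw [this]
    exact neg_le_neg h3
  have hsum_le : ∑ i, Real.log (a i / (a i - t)) ≤ ∑ i, b / a i * Real.log lam :=
    Finset.sum_le_sum fun i _ => key i
  have h5 : ∑ i, b / a i * Real.log lam = b * Real.log lam * M := by
    rw [hM, Finset.mul_sum]
    exact Finset.sum_congr rfl fun i _ => by ring
  have h6 : -t * (lam * M) = b * (1 - lam) * M := by
    rw [htdef, neg_neg, hs_def]
    field_simp
  calc -t * (lam * M) + ∑ i, Real.log (a i / (a i - t))
      ≤ -t * (lam * M) + ∑ i, b / a i * Real.log lam := by linarith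
    _ = b * (1 - lam) * M + b * Real.log lam * M := by rw [h5, h6]
    _ = -b * M * (lam - 1 - Real.log lam) := by ring
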